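/- For integers p, q ≥ 1 and u ≥ 0, define φ(u) = (1/(p+q+1)) · [∫₀¹ y^{q−1}(yu+1)^{−(p+q+1)} dy] / [∫₀¹ y^{q−1}(yu+1)^{−(p+q+2)} dy]. Then φ(0) = 1/(p+q+1) and φ is nondecreasing in u on [0,∞). -/

import Mathlib

open MeasureTheory Set

private lemma stmt8_contOn (k : ℕ) (m : ℤ) {s : Set ℝ} (hs : s ⊆ Ici 0) :
    ContinuousOn (fun t : ℝ => t ^ k * (t + 1) ^ m) s := by
  refine ContinuousOn.mul (by fun_prop) (ContinuousOn.zpow₀ (by fun_prop) m ?_)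
  intro x hx
  left
  have : (0:ℝ) ≤ x := hs hx
  positivity

private lemma stmt8_intble (k : ℕ) (m : ℤ) {a b : ℝ} (ha : 0 ≤ a) (hb : 0 ≤ b) :
    IntervalIntegrable (fun t : ℝ => t ^ k * (t + 1) ^ m) volume a b := by
  refine (stmt8_contOn k m ?_).intervalIntegrable
  intro x hx
  rcases le_total a b with h | h
  · rw [uIcc_of_le h] at hx; exact le_trans ha hx.1
  · rw [uIcc_of_ge h] at hx; exact le_trans hb hx.1

private lemma stmt8_sub (k : ℕ) (m : ℤ) {u : ℝ} (hu : 0 < u) :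
    ∫ y in Ioo (0:ℝ) 1, y ^ k * (y * u + 1) ^ m
      = u ^ (-((k:ℤ)+1)) * ∫ t in (0:ℝ)..u, t ^ k * (t + 1) ^ m := by
  have hu' : u ≠ 0 := ne_of_gt hu
  rw [← integral_Ioc_eq_integral_Ioo, ← intervalIntegral.integral_of_le zero_le_one]
  have key : ∀ y : ℝ, y ^ k * (y * u + 1) ^ m
      = u ^ (-(k:ℤ)) * ((fun t : ℝ => t ^ k * (t + 1) ^ m) (y * u)) := by
    intro y
    simp only [mul_pow, zpow_neg, zpow_natCast]
    field_simp
  simp_rw [key]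
  rw [intervalIntegral.integral_const_mul]
  have comp := intervalIntegral.integral_comp_mul_right
    (a := 0) (b := 1) (fun t : ℝ => t ^ k * (t + 1) ^ m) hu'
  rw [comp]
  simp only [zero_mul, one_mul, smul_eq_mul]
  rw [← mul_assoc]
  congr 1
  rw [neg_add, zpow_add₀ hu', zpow_neg_one]

/-- The boundary function φ of the Kubokawa class under quadratic loss satisfies
φ(0) = 1/(p+q+1) and is nondecreasing on [0,∞). -/
theorem stmt8 (p q : ℕ) (hp : 1 ≤ p) (hq : 1 ≤ q)
    (φ : ℝ → ℝ)
    (hφ : ∀ u : ℝ, φ u = (1 / ((p : ℝ) + q + 1)) *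
      (∫ y in Set.Ioo (0 : ℝ) 1, y ^ (q - 1) * (y * u + 1) ^ (-((p : ℤ) + q + 1))) /
      (∫ y in Set.Ioo (0 : ℝ) 1, y ^ (q - 1) * (y * u + 1) ^ (-((p : ℤ) + q + 2)))) :
    φ 0 = 1 / ((p : ℝ) + q + 1) ∧ MonotoneOn φ (Set.Ici 0) := by
  set k : ℕ := q - 1 with hk
  set m1 : ℤ := -((p : ℤ) + q + 1) with hm1
  set m2 : ℤ := -((p : ℤ) + q + 2) with hm2
  have hm12 : m2 ≤ m1 := by rw [hm1, hm2]; omega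
  set f : ℝ → ℝ := fun t => t ^ k * (t + 1) ^ m1 with hf
  set g : ℝ → ℝ := fun t => t ^ k * (t + 1) ^ m2 with hg
  set F : ℝ → ℝ := fun u => ∫ t in (0:ℝ)..u, f t with hF
  set G : ℝ → ℝ := fun u => ∫ t in (0:ℝ)..u, g t with hG
  -- basic positivity facts
  have hfpos : ∀ t : ℝ, 0 < t → 0 < f t := fun t ht => by
    have : (0:ℝ) < t + 1 := by linarith
    positivity
  have hgpos : ∀ t : ℝ, 0 < t → 0 < g t := fun t ht => by
    have : (0:ℝ) < t + 1 := by linarith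
    positivity
  have hgnonneg : ∀ t : ℝ, 0 ≤ t → 0 ≤ g t := fun t ht => by
    have : (0:ℝ) < t + 1 := by linarith
    positivity
  have hGpos : ∀ u : ℝ, 0 < u → 0 < G u := fun u hu =>
    intervalIntegral.intervalIntegral_pos_of_pos_on (stmt8_intble k m2 le_rfl hu.le)
      (fun x hx => hgpos x hx.1) hu
  -- f t = (t+1) * g t
  have hfg : ∀ t : ℝ, 0 ≤ t → f t = (t + 1) * g t := by
    intro t ht
    have ht1 : (0:ℝ) < t + 1 := by linarith
    have : (t + 1) ^ m1 = (t + 1) * (t + 1) ^ m2 := by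
      rw [hm1, hm2]
      rw [show -((p : ℤ) + q + 1) = 1 + -((p : ℤ) + q + 2) by ring,
        zpow_add₀ ht1.ne', zpow_one]
    simp only [hf, hg, this]
    ring
  -- G u ≤ F u
  have hGF : ∀ u : ℝ, 0 ≤ u → G u ≤ F u := by
    intro u hu
    refine intervalIntegral.integral_mono_on hu (stmt8_intble k m2 le_rfl hu)
      (stmt8_intble k m1 le_rfl hu) ?_
    intro t ht
    have ht1 : (1:ℝ) ≤ t + 1 := by linarith [ht.1]
    have := zpow_le_zpow_right₀ ht1 hm12
    have htk : (0:ℝ) ≤ t ^ k := pow_nonneg ht.1 _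
    exact mul_le_mul_of_nonneg_left this htk
  -- F u ≤ (1+u) * G u
  have hFle : ∀ u : ℝ, 0 ≤ u → F u ≤ (1 + u) * G u := by
    intro u hu
    rw [show (1 + u) * G u = ∫ t in (0:ℝ)..u, (1 + u) * g t from
      (intervalIntegral.integral_const_mul _ _).symm]
    refine intervalIntegral.integral_mono_on hu (stmt8_intble k m1 le_rfl hu)
      ((stmt8_intble k m2 le_rfl hu).const_mul _) ?_
    intro t ht
    rw [hfg t ht.1]
    have := hgnonneg t ht.1
    nlinarith [ht.2]
  -- (1+u) * ∫_u^v g ≤ ∫_u^v f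
  have hDelta : ∀ u v : ℝ, 0 ≤ u → u ≤ v →
      (1 + u) * ∫ t in u..v, g t ≤ ∫ t in u..v, f t := by
    intro u v hu huv
    rw [show (1 + u) * ∫ t in u..v, g t = ∫ t in u..v, (1 + u) * g t from
      (intervalIntegral.integral_const_mul _ _).symm]
    refine intervalIntegral.integral_mono_on huv
      ((stmt8_intble k m2 hu (hu.trans huv)).const_mul _)
      (stmt8_intble k m1 hu (hu.trans huv)) ?_
    intro t ht
    rw [hfg t (hu.trans ht.1)]
    have := hgnonneg t (hu.trans ht.1)
    nlinarith [ht.1]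
  -- representation of φ for positive u
  have hrep : ∀ u : ℝ, 0 < u →
      φ u = (1 / ((p : ℝ) + q + 1)) * (F u / G u) := by
    intro u hu
    have hc : (0:ℝ) < u ^ (-((k:ℤ)+1)) := zpow_pos hu _
    rw [hφ u, stmt8_sub k m1 hu, stmt8_sub k m2 hu]
    rw [show (1 / ((p : ℝ) + q + 1)) * (u ^ (-((k:ℤ)+1)) * F u)
        = u ^ (-((k:ℤ)+1)) * ((1 / ((p : ℝ) + q + 1)) * F u) by ring,
      mul_div_mul_left _ _ hc.ne', mul_div_assoc]
  -- φ 0 = 1/(p+q+1)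
  have hI : (0:ℝ) < ∫ y in Ioo (0:ℝ) 1, y ^ k := by
    rw [← integral_Ioc_eq_integral_Ioo, ← intervalIntegral.integral_of_le zero_le_one]
    exact intervalIntegral.intervalIntegral_pos_of_pos_on
      ((continuousOn_pow k).intervalIntegrable)
      (fun x hx => pow_pos hx.1 _) zero_lt_one
  have hzero : φ 0 = 1 / ((p : ℝ) + q + 1) := by
    rw [hφ 0]
    simp only [mul_zero, zero_add, one_zpow, mul_one]
    rw [mul_div_assoc, div_self hI.ne', mul_one]
  refine ⟨hzero, ?_⟩
  have hn1 : (0:ℝ) ≤ 1 / ((p : ℝ) + q + 1) := by positivity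
  -- key ratio monotonicity
  have hratio : ∀ u v : ℝ, 0 < u → u ≤ v → F u / G u ≤ F v / G v := by
    intro u v hu huv
    have hv : 0 < v := lt_of_lt_of_le hu huv
    rw [div_le_div_iff₀ (hGpos u hu) (hGpos v hv)]
    have hsplitF : F u + (∫ t in u..v, f t) = F v :=
      intervalIntegral.integral_add_adjacent_intervals
        (stmt8_intble k m1 le_rfl hu.le) (stmt8_intble k m1 hu.le hv.le)
    have hsplitG : G u + (∫ t in u..v, g t) = G v :=
      intervalIntegral.integral_add_adjacent_intervals
        (stmt8_intble k m2 le_rfl hu.le) (stmt8_intble k m2 hu.le hv.le)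
    have hDG : 0 ≤ ∫ t in u..v, g t :=
      intervalIntegral.integral_nonneg huv (fun t ht => hgnonneg t (hu.le.trans ht.1))
    have h1 : F u * (∫ t in u..v, g t) ≤ G u * ∫ t in u..v, f t := by
      calc F u * (∫ t in u..v, g t) ≤ ((1 + u) * G u) * (∫ t in u..v, g t) :=
            mul_le_mul_of_nonneg_right (hFle u hu.le) hDG
        _ = G u * ((1 + u) * ∫ t in u..v, g t) := by ring
        _ ≤ G u * ∫ t in u..v, f t :=
            mul_le_mul_of_nonneg_left (hDelta u v hu.le huv) (hGpos u hu).le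
    calc F u * G v = F u * G u + F u * ∫ t in u..v, g t := by rw [← hsplitG]; ring
      _ ≤ F u * G u + G u * ∫ t in u..v, f t := by linarith [h1]
      _ = F v * G u := by rw [← hsplitF]; ring
  intro u hu v hv huv
  rcases eq_or_lt_of_le (Set.mem_Ici.mp hu : (0:ℝ) ≤ u) with h0 | h0
  · rcases eq_or_lt_of_le ((h0 ▸ huv) : (0:ℝ) ≤ v) with h0' | h0'
    · rw [← h0, ← h0']
    · rw [← h0, hzero, hrep v h0']
      have h1 : (1:ℝ) ≤ F v / G v :=
        (one_le_div (hGpos v h0')).mpr (hGF v h0'.le)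
      calc 1 / ((p : ℝ) + q + 1) = (1 / ((p : ℝ) + q + 1)) * 1 := by ring
        _ ≤ (1 / ((p : ℝ) + q + 1)) * (F v / G v) :=
            mul_le_mul_of_nonneg_left h1 hn1
  · rw [hrep u h0, hrep v (h0.trans_le huv)]
    exact mul_le_mul_of_nonneg_left (hratio u v h0 huv) hn1
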